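/- Let x₀, v_max, a > 0 and t₀ < t_f1 ≤ t_f, with Δ := t_f − t₀ and S := t_f − t_f1 ≥ 0. Assume x₀/v_max ≤ Δ < x₀/v_max + v_max/a. Set u := v_max − √(a(v_max·Δ − x₀)), t_acc := t_f1 − (v_max − u)/a, t_dec := t_acc − (v_max − u)/a, and assume t_dec ≥ t₀. Define x* on [t₀, t_f] by: x*(s) = −x₀ + v_max(s − t₀) for s ∈ [t₀, t_dec]; x*(s) = −x₀ + v_max(s − t₀) − (a/2)(s − t_dec)² for s ∈ [t_dec, t_acc]; x*(s) = −x₀ + v_max(t_acc − t₀) − (v_max − u)²/(2a) + u(s − t_acc) + (a/2)(s − t_acc)² for s ∈ [t_acc, t_f1]; x*(s) = −v_max·S + v_max(s − t_f1) for s ∈ [t_f1, t_f]. Then x* belongs to Π(t₀, t_f, x₀, v_max, a) and satisfies x*(t_f1) = −v_max·S and ẋ*(t_acc) = u with 0 < u ≤ v_max. -/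

import Mathlib

/-- The class `Π(t₀, t_f, x₀, v_max, a)` of compatible trajectories. -/
def CompatTraj (t₀ tf x₀ vmax a : ℝ) : Set (ℝ → ℝ) :=
  {x | ContDiffOn ℝ 1 x (Set.Icc t₀ tf) ∧
    LipschitzOnWith (Real.toNNReal a) (deriv x) (Set.Icc t₀ tf) ∧
    (∀ s ∈ Set.Icc t₀ tf, 0 ≤ deriv x s ∧ deriv x s ≤ vmax) ∧
    x t₀ = -x₀ ∧ deriv x t₀ = vmax ∧ x tf = 0 ∧ deriv x tf = vmax}

/-- The closed-form trajectory without a full stop: drive at `v_max`, decelerate at `−a`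
to the minimum speed `u = v_max − √(a(v_max·Δ − x₀))`, immediately accelerate at `a`
back to `v_max` at the platoon head's crossing time `t_f1`, then drive at `v_max`. -/
noncomputable def xStarNoStop (x₀ vmax a t₀ tf1 tf : ℝ) (s : ℝ) : ℝ :=
  let Δ := tf - t₀
  let S := tf - tf1
  let u := vmax - Real.sqrt (a * (vmax * Δ - x₀))
  let tacc := tf1 - (vmax - u) / a
  let tdec := tacc - (vmax - u) / a
  if s ≤ tdec then -x₀ + vmax * (s - t₀)
  else if s ≤ tacc then -x₀ + vmax * (s - t₀) - a / 2 * (s - tdec) ^ 2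
  else if s ≤ tf1 then
    -x₀ + vmax * (tacc - t₀) - (vmax - u) ^ 2 / (2 * a)
      + u * (s - tacc) + a / 2 * (s - tacc) ^ 2
  else -vmax * S + vmax * (s - tf1)

open Filter Set

private lemma hasDerivAt_quad (A B C c s : ℝ) :
    HasDerivAt (fun t => A + B * (t - c) + C * (t - c) ^ 2) (B + 2 * C * (s - c)) s := by
  have h1 : HasDerivAt (fun t : ℝ => t - c) 1 s := (hasDerivAt_id s).sub_const c
  have h2 : HasDerivAt (fun t : ℝ => A + B * (t - c)) B s := by
    exact ((hasDerivAt_const s A).add (h1.const_mul B)).congr_deriv (by simp)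
  have h3 : HasDerivAt (fun t : ℝ => C * (t - c) ^ 2) (2 * C * (s - c)) s := by
    have := (h1.pow 2).const_mul C
    exact this.congr_deriv (by norm_num; ring)
  exact h2.add h3

private lemma hasDerivAt_junction {f g h : ℝ → ℝ} {c d : ℝ}
    (hg : HasDerivAt g d c) (hh : HasDerivAt h d c)
    (hfg : ∀ᶠ x in nhdsWithin c (Set.Iic c), f x = g x)
    (hfh : ∀ᶠ x in nhdsWithin c (Set.Ici c), f x = h x) :
    HasDerivAt f d c := by
  have hcg : f c = g c := hfg.self_of_nhdsWithin (le_refl c)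
  have hch : f c = h c := hfh.self_of_nhdsWithin (le_refl c)
  have h1 : HasDerivWithinAt f d (Set.Iic c) c :=
    hg.hasDerivWithinAt.congr_of_eventuallyEq hfg hcg
  have h2 : HasDerivWithinAt f d (Set.Ici c) c :=
    hh.hasDerivWithinAt.congr_of_eventuallyEq hfh hch
  have h3 := h1.union h2
  rw [Set.Iic_union_Ici] at h3
  exact hasDerivWithinAt_univ.mp h3

set_option maxHeartbeats 1000000 in
/-- Feasibility of the non-stopping trajectory: under the stated conditions, the
closed-form non-stopping trajectory is a compatible trajectory, is exactly at distance
`v_max·S` from the intersection at the platoon head's crossing time `t_f1`, and attains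
its minimum speed `u = v_max − √(a(v_max·Δ − x₀))` (with `0 < u ≤ v_max`) at `t_acc`. -/
theorem xStarNoStop_feasible
    (x₀ vmax a t₀ tf1 tf : ℝ)
    (hx₀ : 0 < x₀) (hv : 0 < vmax) (ha : 0 < a)
    (ht₀ : t₀ < tf1) (htf : tf1 ≤ tf)
    (hΔ₁ : x₀ / vmax ≤ tf - t₀)
    (hΔ₂ : tf - t₀ < x₀ / vmax + vmax / a)
    (hdec : tf1 - 2 * (vmax - (vmax - Real.sqrt (a * (vmax * (tf - t₀) - x₀)))) / a ≥ t₀) :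
    xStarNoStop x₀ vmax a t₀ tf1 tf ∈ CompatTraj t₀ tf x₀ vmax a ∧
    xStarNoStop x₀ vmax a t₀ tf1 tf tf1 = -vmax * (tf - tf1) ∧
    deriv (xStarNoStop x₀ vmax a t₀ tf1 tf)
        (tf1 - (vmax - (vmax - Real.sqrt (a * (vmax * (tf - t₀) - x₀)))) / a)
      = vmax - Real.sqrt (a * (vmax * (tf - t₀) - x₀)) ∧
    0 < vmax - Real.sqrt (a * (vmax * (tf - t₀) - x₀)) ∧
    vmax - Real.sqrt (a * (vmax * (tf - t₀) - x₀)) ≤ vmax := by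
  have hΔ : x₀ ≤ vmax * (tf - t₀) := by
    rw [div_le_iff₀ hv] at hΔ₁; linarith
  set w := Real.sqrt (a * (vmax * (tf - t₀) - x₀)) with hw_def
  have hw0 : 0 ≤ w := Real.sqrt_nonneg _
  have hw2 : w ^ 2 = a * (vmax * (tf - t₀) - x₀) := Real.sq_sqrt (by nlinarith)
  have hwv : w < vmax := by
    have h2 : a * (vmax * (tf - t₀) - x₀) < vmax ^ 2 := by
      rw [div_add_div _ _ hv.ne' ha.ne', lt_div_iff₀ (by positivity)] at hΔ₂
      nlinarith
    rw [hw_def]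
    exact (Real.sqrt_lt' hv).mpr h2
  set u := vmax - w with hu_def
  set tacc := tf1 - w / a with htacc_def
  set tdec := tacc - w / a with htdec_def
  have hwa : a * (w / a) = w := by field_simp
  have ht₀dec : t₀ ≤ tdec := by
    rw [sub_sub_cancel] at hdec
    have h2 : 2 * w / a = w / a + w / a := by ring
    rw [h2] at hdec
    rw [htdec_def, htacc_def]; linarith
  have hdt : tdec ≤ tacc := by
    rw [htdec_def]; nlinarith [div_nonneg hw0 ha.le]
  have hta : tacc ≤ tf1 := by
    rw [htacc_def]; nlinarith [div_nonneg hw0 ha.le]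
  set f : ℝ → ℝ := fun s =>
      if s ≤ tdec then -x₀ + vmax * (s - t₀)
      else if s ≤ tacc then -x₀ + vmax * (s - t₀) - a / 2 * (s - tdec) ^ 2
      else if s ≤ tf1 then
        -x₀ + vmax * (tacc - t₀) - w ^ 2 / (2 * a) + u * (s - tacc) + a / 2 * (s - tacc) ^ 2
      else -vmax * (tf - tf1) + vmax * (s - tf1) with hf_def
  have hxdef : xStarNoStop x₀ vmax a t₀ tf1 tf = f := by
    funext s
    rw [hf_def, htdec_def, htacc_def, hu_def, hw_def]
    simp only [xStarNoStop, sub_sub_cancel]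
  rw [hxdef]
  have hptacc : tf1 - (vmax - u) / a = tacc := by rw [htacc_def, hu_def]; ring
  rw [hptacc]
  rcases eq_or_lt_of_le hw0 with hdeg | hwpos
  · -- degenerate case : w = 0, the trajectory is linear
    have hx0eq : vmax * (tf - t₀) = x₀ := by
      have h0 : a * (vmax * (tf - t₀) - x₀) = 0 := by rw [← hw2, ← hdeg]; ring
      have h1 := (mul_eq_zero.mp h0).resolve_left ha.ne'
      linarith
    have hwa0 : w / a = 0 := by rw [← hdeg]; simp
    have htd1 : tacc = tf1 := by rw [htacc_def, hwa0]; ring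
    have htd2 : tdec = tf1 := by rw [htdec_def, htd1, hwa0]; ring
    have hfp1 : f = fun s => -x₀ + vmax * (s - t₀) := by
      funext s
      simp only [hf_def]
      by_cases hs : s ≤ tf1
      · rw [if_pos (show s ≤ tdec by rw [htd2]; exact hs)]
      · rw [if_neg (show ¬ s ≤ tdec by rw [htd2]; exact hs),
          if_neg (show ¬ s ≤ tacc by rw [htd1]; exact hs), if_neg hs]
        linear_combination -hx0eq
    have hd1 : ∀ s : ℝ, HasDerivAt f vmax s := by
      intro s
      rw [hfp1]
      simpa using hasDerivAt_quad (-x₀) vmax 0 t₀ s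
    have hderiv' : deriv f = fun _ => vmax := funext fun s => (hd1 s).deriv
    simp only [CompatTraj, Set.mem_setOf_eq]
    refine ⟨⟨?_, ?_, ?_, ?_, ?_, ?_, ?_⟩, ?_, ?_, ?_, ?_⟩
    · exact (contDiff_one_iff_deriv.mpr
        ⟨fun s => (hd1 s).differentiableAt, by rw [hderiv']; exact continuous_const⟩).contDiffOn
    · rw [hderiv']
      intro p _ q _
      simp
    · intro s _; rw [hderiv']; exact ⟨hv.le, le_rfl⟩
    · rw [hfp1]; simp
    · rw [hderiv']
    · rw [hfp1]; show -x₀ + vmax * (tf - t₀) = 0; linarith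
    · rw [hderiv']
    · rw [hfp1]; show -x₀ + vmax * (tf1 - t₀) = -vmax * (tf - tf1); linarith
    · rw [hderiv']; show vmax = u; rw [hu_def, ← hdeg]; ring
    · rw [hu_def, ← hdeg]; simpa using hv
    · rw [hu_def]; linarith
  · -- main case : w > 0
    have hwap : 0 < w / a := div_pos hwpos ha
    have hdt' : tdec < tacc := by rw [htdec_def]; linarith
    have hta' : tacc < tf1 := by rw [htacc_def]; linarith
    set v : ℝ → ℝ := fun s => vmax - max 0 (w - a * |s - tacc|) with hv_def
    -- derivatives of the four pieces
    have hd1 : ∀ s : ℝ, HasDerivAt (fun t => -x₀ + vmax * (t - t₀)) vmax s := by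
      intro s; simpa using hasDerivAt_quad (-x₀) vmax 0 t₀ s
    have hd2 : ∀ s : ℝ, HasDerivAt (fun t => -x₀ + vmax * (t - t₀) - a / 2 * (t - tdec) ^ 2)
        (vmax - a * (s - tdec)) s := by
      intro s
      have h := hasDerivAt_quad (-x₀ + vmax * (tdec - t₀)) vmax (-(a / 2)) tdec s
      have hfun : (fun t => -x₀ + vmax * (tdec - t₀) + vmax * (t - tdec) + -(a / 2) * (t - tdec) ^ 2)
          = fun t => -x₀ + vmax * (t - t₀) - a / 2 * (t - tdec) ^ 2 := by funext t; ring
      rw [hfun] at h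
      convert h using 1; ring
    have hd3 : ∀ s : ℝ, HasDerivAt
        (fun t => -x₀ + vmax * (tacc - t₀) - w ^ 2 / (2 * a) + u * (t - tacc) + a / 2 * (t - tacc) ^ 2)
        (u + a * (s - tacc)) s := by
      intro s
      have h := hasDerivAt_quad (-x₀ + vmax * (tacc - t₀) - w ^ 2 / (2 * a)) u (a / 2) tacc s
      have hfun : (fun t => -x₀ + vmax * (tacc - t₀) - w ^ 2 / (2 * a) + u * (t - tacc) + (a / 2) * (t - tacc) ^ 2)
          = fun t => (-x₀ + vmax * (tacc - t₀) - w ^ 2 / (2 * a)) + u * (t - tacc) + (a / 2) * (t - tacc) ^ 2 := by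
        funext t; ring
      rw [hfun]
      convert h using 1; ring
    have hd4 : ∀ s : ℝ, HasDerivAt (fun t => -vmax * (tf - tf1) + vmax * (t - tf1)) vmax s := by
      intro s; simpa using hasDerivAt_quad (-vmax * (tf - tf1)) vmax 0 tf1 s
    -- piece agreement
    have hf1 : ∀ x ≤ tdec, f x = -x₀ + vmax * (x - t₀) := by
      intro x hx
      simp only [hf_def]
      rw [if_pos hx]
    have hf2 : ∀ x, tdec ≤ x → x ≤ tacc →
        f x = -x₀ + vmax * (x - t₀) - a / 2 * (x - tdec) ^ 2 := by
      intro x h1 h2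
      simp only [hf_def]
      rcases eq_or_lt_of_le h1 with rfl | h1'
      · rw [if_pos le_rfl]; ring
      · rw [if_neg (not_le.mpr h1'), if_pos h2]
    have hf3 : ∀ x, tacc ≤ x → x ≤ tf1 →
        f x = -x₀ + vmax * (tacc - t₀) - w ^ 2 / (2 * a) + u * (x - tacc) + a / 2 * (x - tacc) ^ 2 := by
      intro x h1 h2
      simp only [hf_def]
      rcases eq_or_lt_of_le h1 with rfl | h1'
      · rw [if_neg (not_le.mpr hdt'), if_pos le_rfl]
        have h5 : tacc - tdec = w / a := by rw [htdec_def]; ring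
        rw [h5]
        field_simp
        ring
      · rw [if_neg (not_le.mpr (lt_of_le_of_lt hdt h1')), if_neg (not_le.mpr h1'), if_pos h2]
    have hf4 : ∀ x, tf1 ≤ x → f x = -vmax * (tf - tf1) + vmax * (x - tf1) := by
      intro x h1
      simp only [hf_def]
      rcases eq_or_lt_of_le h1 with rfl | h1'
      · rw [if_neg (not_le.mpr (lt_of_le_of_lt hdt hta')), if_neg (not_le.mpr hta'), if_pos le_rfl]
        have h5 : tf1 - tacc = w / a := by rw [htacc_def]; ring
        have h6 : w ^ 2 / a = vmax * (tf - t₀) - x₀ := by rw [hw2]; field_simp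
        have e : -x₀ + vmax * (tacc - t₀) - w ^ 2 / (2 * a) + u * (tf1 - tacc) + a / 2 * (tf1 - tacc) ^ 2
            = -x₀ + vmax * (tf1 - t₀) - w ^ 2 / a := by
          rw [h5, htacc_def, hu_def]
          field_simp
          ring
        rw [e, h6]
        ring
      · rw [if_neg (not_le.mpr (lt_of_le_of_lt (hdt.trans hta) h1')),
          if_neg (not_le.mpr (lt_of_le_of_lt hta h1')), if_neg (not_le.mpr h1')]
    -- values of the derivative function
    have hv1 : ∀ s ≤ tdec, v s = vmax := by
      intro s hs
      simp only [hv_def]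
      have habs : |s - tacc| = tacc - s := by
        rw [abs_of_nonpos (by linarith)]; ring
      rw [habs, max_eq_left]
      · ring
      · have h3 := mul_le_mul_of_nonneg_left
          (show w / a ≤ tacc - s by rw [htdec_def] at hs; linarith) ha.le
        rw [hwa] at h3; linarith
    have hv2 : ∀ s, tdec ≤ s → s ≤ tacc → v s = vmax - a * (s - tdec) := by
      intro s h1 h2
      simp only [hv_def]
      have habs : |s - tacc| = tacc - s := by
        rw [abs_of_nonpos (by linarith)]; ring
      rw [habs, max_eq_right]
      · have h4 : a * (s - tdec) = a * (s - tacc) + w := by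
          rw [htdec_def]
          rw [show a * (s - (tacc - w / a)) = a * (s - tacc) + a * (w / a) from by ring, hwa]
        rw [h4]; ring
      · have h3 := mul_le_mul_of_nonneg_left
          (show tacc - s ≤ w / a by rw [htdec_def] at h1; linarith) ha.le
        rw [hwa] at h3; linarith
    have hv3 : ∀ s, tacc ≤ s → s ≤ tf1 → v s = u + a * (s - tacc) := by
      intro s h1 h2
      simp only [hv_def]
      have habs : |s - tacc| = s - tacc := abs_of_nonneg (by linarith)
      rw [habs, max_eq_right]
      · rw [hu_def]; ring
      · have h3 := mul_le_mul_of_nonneg_left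
          (show s - tacc ≤ w / a by rw [htacc_def]; linarith) ha.le
        rw [hwa] at h3; linarith
    have hv4 : ∀ s, tf1 ≤ s → v s = vmax := by
      intro s h1
      simp only [hv_def]
      have habs : |s - tacc| = s - tacc := abs_of_nonneg (by linarith)
      rw [habs, max_eq_left]
      · ring
      · have h3 := mul_le_mul_of_nonneg_left
          (show w / a ≤ s - tacc by rw [htacc_def]; linarith) ha.le
        rw [hwa] at h3; linarith
    -- the global derivative
    have hder : ∀ s, HasDerivAt f (v s) s := by
      intro s
      rcases lt_trichotomy s tdec with h | h | h
      · rw [hv1 s h.le]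
        refine (EventuallyEq.hasDerivAt_iff ?_).mpr (hd1 s)
        filter_upwards [Iio_mem_nhds h] with t ht
        exact hf1 t ht.le
      · rw [h, hv1 tdec le_rfl]
        apply hasDerivAt_junction (hd1 tdec) (by simpa using hd2 tdec)
        · exact eventually_nhdsWithin_of_forall fun x hx => hf1 x hx
        · filter_upwards [mem_nhdsWithin_of_mem_nhds (Iio_mem_nhds hdt'),
            self_mem_nhdsWithin] with t h1 h2
          exact hf2 t h2 h1.le
      · rcases lt_trichotomy s tacc with h2 | h2 | h2
        · rw [hv2 s h.le h2.le]
          refine (EventuallyEq.hasDerivAt_iff ?_).mpr (hd2 s)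
          filter_upwards [Ioo_mem_nhds h h2] with t ht
          exact hf2 t ht.1.le ht.2.le
        · rw [h2]
          have e1 : v tacc = u := by rw [hv3 tacc le_rfl hta'.le]; ring
          rw [e1]
          have hg : HasDerivAt (fun t => -x₀ + vmax * (t - t₀) - a / 2 * (t - tdec) ^ 2) u tacc := by
            have h4 := hd2 tacc
            have e2 : vmax - a * (tacc - tdec) = u := by
              rw [htdec_def, hu_def, show a * (tacc - (tacc - w / a)) = a * (w / a) from by ring, hwa]
            rwa [e2] at h4
          have hh : HasDerivAt
              (fun t => -x₀ + vmax * (tacc - t₀) - w ^ 2 / (2 * a) + u * (t - tacc) + a / 2 * (t - tacc) ^ 2)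
              u tacc := by simpa using hd3 tacc
          apply hasDerivAt_junction hg hh
          · filter_upwards [mem_nhdsWithin_of_mem_nhds (Ioi_mem_nhds hdt'),
              self_mem_nhdsWithin] with t h1 h2
            exact hf2 t h1.le h2
          · filter_upwards [mem_nhdsWithin_of_mem_nhds (Iio_mem_nhds hta'),
              self_mem_nhdsWithin] with t h1 h2
            exact hf3 t h2 h1.le
        · rcases lt_trichotomy s tf1 with h3 | h3 | h3
          · rw [hv3 s h2.le h3.le]
            refine (EventuallyEq.hasDerivAt_iff ?_).mpr (hd3 s)
            filter_upwards [Ioo_mem_nhds h2 h3] with t ht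
            exact hf3 t ht.1.le ht.2.le
          · rw [h3, hv4 tf1 le_rfl]
            have hg : HasDerivAt
                (fun t => -x₀ + vmax * (tacc - t₀) - w ^ 2 / (2 * a) + u * (t - tacc) + a / 2 * (t - tacc) ^ 2)
                vmax tf1 := by
              have h4 := hd3 tf1
              have e2 : u + a * (tf1 - tacc) = vmax := by
                rw [hu_def, htacc_def, show a * (tf1 - (tf1 - w / a)) = a * (w / a) from by ring, hwa]
                ring
              rwa [e2] at h4
            apply hasDerivAt_junction hg (hd4 tf1)
            · filter_upwards [mem_nhdsWithin_of_mem_nhds (Ioi_mem_nhds hta'),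
                self_mem_nhdsWithin] with t h1 h2
              exact hf3 t h1.le h2
            · exact eventually_nhdsWithin_of_forall fun x hx => hf4 x hx
          · rw [hv4 s h3.le]
            refine (EventuallyEq.hasDerivAt_iff ?_).mpr (hd4 s)
            filter_upwards [Ioi_mem_nhds h3] with t ht
            exact hf4 t ht.le
    have hderiv' : deriv f = v := funext fun s => (hder s).deriv
    have hlip : LipschitzWith (Real.toNNReal a) v := by
      apply LipschitzWith.of_dist_le_mul
      intro s t
      simp only [hv_def, Real.dist_eq, Real.coe_toNNReal a ha.le]
      have e : vmax - max 0 (w - a * |s - tacc|) - (vmax - max 0 (w - a * |t - tacc|))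
          = max (w - a * |t - tacc|) 0 - max (w - a * |s - tacc|) 0 := by
        rw [max_comm (w - a * |t - tacc|) 0, max_comm (w - a * |s - tacc|) 0]; ring
      rw [e]
      calc |max (w - a * |t - tacc|) 0 - max (w - a * |s - tacc|) 0|
          ≤ |(w - a * |t - tacc|) - (w - a * |s - tacc|)| := abs_max_sub_max_le_abs _ _ _
        _ = a * |(|s - tacc| - |t - tacc|)| := by
            rw [show (w - a * |t - tacc|) - (w - a * |s - tacc|) = a * (|s - tacc| - |t - tacc|) from by ring,
              abs_mul, abs_of_pos ha]
        _ ≤ a * |s - t| := by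
            have h5 := abs_abs_sub_abs_le_abs_sub (s - tacc) (t - tacc)
            rw [show (s - tacc) - (t - tacc) = s - t from by ring] at h5
            exact mul_le_mul_of_nonneg_left h5 ha.le
    have hbound : ∀ s, 0 ≤ v s ∧ v s ≤ vmax := by
      intro s
      simp only [hv_def]
      constructor
      · have h1 : max 0 (w - a * |s - tacc|) ≤ vmax := by
          apply max_le hv.le
          have h2 := mul_nonneg ha.le (abs_nonneg (s - tacc))
          linarith
        linarith
      · have h2 : (0 : ℝ) ≤ max 0 (w - a * |s - tacc|) := le_max_left 0 _
        linarith
    simp only [CompatTraj, Set.mem_setOf_eq]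
    refine ⟨⟨?_, ?_, ?_, ?_, ?_, ?_, ?_⟩, ?_, ?_, ?_, ?_⟩
    · exact (contDiff_one_iff_deriv.mpr
        ⟨fun s => (hder s).differentiableAt, by rw [hderiv']; exact hlip.continuous⟩).contDiffOn
    · rw [hderiv']; exact hlip.lipschitzOnWith
    · intro s _; rw [hderiv']; exact hbound s
    · rw [hf1 t₀ ht₀dec]; ring
    · rw [hderiv', hv1 t₀ ht₀dec]
    · rw [hf4 tf htf]; ring
    · rw [hderiv', hv4 tf htf]
    · rw [hf4 tf1 le_rfl]; ring
    · rw [hderiv', hv3 tacc le_rfl hta]; ring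
    · rw [hu_def]; linarith
    · rw [hu_def]; linarith
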